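/- For any consistent, computably axiomatizable formal system S capable of representing elementary arithmetic, there exists a sentence φ such that neither φ nor ¬φ is provable in S; hence S is incomplete. -/

import Mathlib

open Nat.Partrec (Code)

/-- Gödel's first incompleteness theorem, abstract form.
Let a formal system `S` be given by its provability predicate `Prov` on Gödel
codes of sentences, with a computable negation map `neg`.  Assume:
* `S` is computably axiomatizable: its set of theorems `Prov` is c.e.;
* `S` is consistent: no sentence and its negation are both provable;
* `S` represents elementary arithmetic, witnessed by a computable map `σ`
  assigning to each machine–input pair `(e, x)` a sentence expressing
  "`φ_e` halts on `x`", which is provable exactly when `φ_e(x)` halts.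
Then there is a sentence `φ` such that neither `φ` nor `¬φ` is provable:
`S` is incomplete. -/
theorem goedel_first_incompleteness
    (Prov : ℕ → Prop) (neg : ℕ → ℕ) (σ : ℕ × ℕ → ℕ)
    (hre : REPred Prov) (hneg : Computable neg) (hσ : Computable σ)
    (hcons : ¬ ∃ φ : ℕ, Prov φ ∧ Prov (neg φ))
    (hrepr : ∀ e x : ℕ,
      ((Denumerable.ofNat Code e).eval x).Dom → Prov (σ (e, x)))
    (hsound : ∀ e x : ℕ,
      Prov (σ (e, x)) → ((Denumerable.ofNat Code e).eval x).Dom) :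
    ∃ φ : ℕ, ¬ Prov φ ∧ ¬ Prov (neg φ) := by
  -- the computable "diagonal" map
  have hg : Computable fun x : ℕ => neg (σ (x, x)) :=
    hneg.comp (hσ.comp (Computable.id.pair Computable.id))
  -- the partial function halting iff `Prov (neg (σ (x, x)))`
  have hf : Partrec fun x : ℕ =>
      (Part.assert (Prov (neg (σ (x, x)))) fun _ => Part.some ()).map fun _ => 0 :=
    (hre.comp hg).map (Computable.const 0).to₂
  obtain ⟨c, hc⟩ := Nat.Partrec.Code.exists_code.1 (Partrec.nat_iff.1 hf)
  set e := Encodable.encode c with he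
  have hce : Denumerable.ofNat Code e = c := Denumerable.ofNat_encode c
  have hdom : ∀ x : ℕ, ((Denumerable.ofNat Code e).eval x).Dom ↔
      Prov (neg (σ (x, x))) := by
    intro x
    rw [hce, hc]
    simp [Part.assert]
  refine ⟨σ (e, e), ?_, ?_⟩
  · intro hP
    have h1 := hsound e e hP
    have h2 := (hdom e).1 h1
    exact hcons ⟨σ (e, e), hP, h2⟩
  · intro hP
    have h1 := hrepr e e ((hdom e).2 hP)
    exact hcons ⟨σ (e, e), h1, hP⟩
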